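/- For all n ≥ 2 and k ≥ 0, the number h(n,k) of partial Łukasiewicz paths of length n ending at height k whose last step is a horizontal step satisfies (n+k) · h(n,k) = (k+2) · C(2n+k−3, n−2). -/

import Mathlib

/-- A partial Łukasiewicz path of length `n` ending at height `k`:
a list of `n` integer steps, each `≥ -1`, with all partial sums `≥ 0`
and total sum `k`. -/
def IsPartialLuk (w : List ℤ) (n k : ℕ) : Prop :=
  w.length = n ∧ (∀ x ∈ w, -1 ≤ x) ∧ (∀ i, 0 ≤ (w.take i).sum) ∧ w.sum = k

/-- The last step of the path is a horizontal step, i.e. `w_n = 0`. -/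
def LastStepFlat (w : List ℤ) : Prop := w.getLast? = some 0

lemma sum_map_add_one (w : List ℤ) : (w.map (fun x => x + 1)).sum = w.sum + w.length := by
  induction w with
  | nil => simp
  | cons a t ih => simp [ih]; ring

lemma luk_mem_bound {w : List ℤ} {m k : ℕ} (h : IsPartialLuk w m k) {x : ℤ}
    (hx : x ∈ w) : x ≤ m + k := by
  obtain ⟨hlen, hmem, _, hsum⟩ := h
  have h1 : x + 1 ≤ (w.map (fun x => x + 1)).sum := by
    refine List.single_le_sum ?_ _ (List.mem_map_of_mem hx)
    rintro b hb
    obtain ⟨y, hy, rfl⟩ := List.mem_map.1 hb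
    linarith [hmem y hy]
  rw [sum_map_add_one, hsum, hlen] at h1
  push_cast at h1 ⊢
  linarith

lemma luk_finite (m k : ℕ) : {w : List ℤ | IsPartialLuk w m k}.Finite := by
  have hS : (Set.Icc (-1 : ℤ) (m + k)).Finite := Set.finite_Icc _ _
  have : Finite ↥(Set.Icc (-1 : ℤ) (m + k)) := hS.to_subtype
  have hfin := (List.finite_length_eq ↥(Set.Icc (-1 : ℤ) (m + k)) m).image
    (List.map Subtype.val)
  apply hfin.subset
  rintro w hw
  change IsPartialLuk w m k at hw
  have hmem : ∀ x ∈ w, x ∈ Set.Icc (-1 : ℤ) (m + k) := fun x hx => ⟨hw.2.1 x hx, luk_mem_bound hw hx⟩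
  refine ⟨w.pmap (fun x hx => (⟨x, hx⟩ : ↥(Set.Icc (-1 : ℤ) (m + k)))) ?_, ?_, ?_⟩
  · intro x hx
    exact hmem x hx
  · simp [hw.1]
  · simp [List.map_pmap]

noncomputable instance lukFintype (m k : ℕ) : Fintype {w : List ℤ // IsPartialLuk w m k} :=
  (luk_finite m k).fintype

noncomputable def L (m k : ℕ) : ℕ := Nat.card {w : List ℤ // IsPartialLuk w m k}

lemma luk_concat {u : List ℤ} {m j : ℕ} (h : IsPartialLuk u m j) {c : ℤ} (hc : -1 ≤ c)
    {k : ℕ} (hk : (k : ℤ) = j + c) : IsPartialLuk (u ++ [c]) (m + 1) k := by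
  obtain ⟨hlen, hmem, htake, hsum⟩ := h
  refine ⟨by simp [hlen], ?_, ?_, by simp [hsum, hk]⟩
  · intro x hx
    rcases List.mem_append.1 hx with hx | hx
    · exact hmem x hx
    · simp at hx; omega
  · intro i
    rcases le_or_gt i u.length with hi | hi
    · rw [List.take_append_of_le_length hi]; exact htake i
    · rw [List.take_of_length_le (by simp; omega)]
      simp [hsum]; omega

lemma luk_dropLast {w : List ℤ} {m k : ℕ} (h : IsPartialLuk w (m + 1) k) :
    IsPartialLuk w.dropLast m (w.dropLast.sum.toNat) ∧ 0 ≤ w.dropLast.sum ∧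
      w.dropLast.sum ≤ k + 1 ∧
      w = w.dropLast ++ [(k : ℤ) - w.dropLast.sum] := by
  obtain ⟨hlen, hmem, htake, hsum⟩ := h
  have hne : w ≠ [] := by intro h; subst h; simp at hlen
  have hdt : w.dropLast = w.take m := by
    rw [List.dropLast_eq_take, hlen]; rfl
  have h0 : 0 ≤ w.dropLast.sum := by rw [hdt]; exact htake m
  have hconc : w.dropLast ++ [w.getLast hne] = w := List.dropLast_append_getLast hne
  have hlast : w.getLast hne = (k : ℤ) - w.dropLast.sum := by
    have := hconc
    have h2 : w.dropLast.sum + w.getLast hne = w.sum := by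
      conv_rhs => rw [← hconc]
      simp
    rw [hsum] at h2; linarith
  have hlm : -1 ≤ w.getLast hne := hmem _ (List.getLast_mem hne)
  refine ⟨⟨?_, ?_, ?_, ?_⟩, h0, by omega, by rw [← hlast]; exact hconc.symm⟩
  · rw [hdt, List.length_take, hlen]; omega
  · intro x hx
    exact hmem x (List.dropLast_sublist w |>.mem hx)
  · intro i
    rw [hdt, List.take_take]
    exact htake _
  · omega

noncomputable def lukEquiv (m k : ℕ) :
    {v : List ℤ // IsPartialLuk v (m + 1) k} ≃
      Σ j : Fin (k + 2), {u : List ℤ // IsPartialLuk u m j} where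
  toFun v := ⟨⟨v.1.dropLast.sum.toNat, by
      have h := luk_dropLast v.2; omega⟩, ⟨v.1.dropLast, (luk_dropLast v.2).1⟩⟩
  invFun p := ⟨p.2.1 ++ [(k : ℤ) - (p.1 : ℕ)], by
      have hsum : p.2.1.sum = ((p.1 : ℕ) : ℤ) := p.2.2.2.2.2
      have hj : (p.1 : ℕ) ≤ k + 1 := by omega
      exact luk_concat p.2.2 (by push_cast; omega) (by push_cast; ring)⟩
  left_inv v := by
    obtain ⟨h1, h2, h3, h4⟩ := luk_dropLast v.2
    ext1
    simp only
    conv_rhs => rw [h4]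
    congr 2
    omega
  right_inv p := by
    obtain ⟨j, u⟩ := p
    have hsum : u.1.sum = ((j : ℕ) : ℤ) := u.2.2.2.2
    refine Sigma.ext ?_ ?_
    · simp [List.dropLast_concat, hsum]
    · simp only [List.dropLast_concat]
      rw [Subtype.heq_iff_coe_eq (fun x => by simp [hsum])]

lemma L_rec (m k : ℕ) : L (m + 1) k = ∑ j ∈ Finset.range (k + 2), L m j := by
  simp only [L, Nat.card_eq_fintype_card]
  rw [Fintype.card_congr (lukEquiv m k), Fintype.card_sigma,
    Fin.sum_univ_eq_sum_range (fun j => Fintype.card {u : List ℤ // IsPartialLuk u m j})]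

lemma L_one (k : ℕ) : L 1 k = 1 := by
  rw [L, Nat.card_eq_one_iff_unique]
  constructor
  · constructor
    rintro ⟨v, hv⟩ ⟨w, hw⟩
    obtain ⟨a, rfl⟩ := List.length_eq_one_iff.1 hv.1
    obtain ⟨b, rfl⟩ := List.length_eq_one_iff.1 hw.1
    have : a = (k : ℤ) := by simpa using hv.2.2.2
    have : b = (k : ℤ) := by simpa using hw.2.2.2
    simp_all
  · refine ⟨[(k : ℤ)], rfl, ?_, ?_, by simp⟩
    · intro x hx; simp at hx; omega
    · intro i
      rcases i with _ | i <;> simp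

lemma luk_flat_sum {w : List ℤ} {m k : ℕ} (h : IsPartialLuk w (m + 1) k)
    (hf : LastStepFlat w) : w.dropLast.sum = (k : ℤ) ∧ w = w.dropLast ++ [(0 : ℤ)] := by
  obtain ⟨h1, h0, hle, h4⟩ := luk_dropLast h
  have : w.getLast? = some ((k : ℤ) - w.dropLast.sum) := by
    conv_lhs => rw [h4]
    exact List.getLast?_concat
  rw [LastStepFlat, this, Option.some_inj] at hf
  have hs : w.dropLast.sum = (k : ℤ) := by linarith
  refine ⟨hs, ?_⟩
  conv_lhs => rw [h4, hs]
  rw [sub_self]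

noncomputable def flatEquiv (m k : ℕ) :
    {w : List ℤ // IsPartialLuk w (m + 1) k ∧ LastStepFlat w} ≃
      {v : List ℤ // IsPartialLuk v m k} where
  toFun w := ⟨w.1.dropLast, by
    have h1 := (luk_dropLast w.2.1).1
    have h2 := (luk_flat_sum w.2.1 w.2.2).1
    rwa [h2, Int.toNat_natCast] at h1⟩
  invFun v := ⟨v.1 ++ [(0 : ℤ)],
    luk_concat v.2 (by norm_num) (by ring),
    by rw [LastStepFlat, List.getLast?_concat]⟩
  left_inv w := by
    ext1
    exact ((luk_flat_sum w.2.1 w.2.2).2).symm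
  right_inv v := by
    ext1
    exact List.dropLast_concat

lemma card_flat (m k : ℕ) :
    Nat.card {w : List ℤ // IsPartialLuk w (m + 1) k ∧ LastStepFlat w} = L m k :=
  Nat.card_congr (flatEquiv m k)

lemma L_closed : ∀ m k : ℕ,
    L (m + 1) k + Nat.choose (2 * m + k + 1) (m + k + 2) = Nat.choose (2 * m + k + 1) m := by
  intro m
  induction m with
  | zero =>
    intro k
    rw [L_one, Nat.choose_eq_zero_of_lt (by omega)]
    simp
  | succ m ihm =>
    intro k
    induction k with
    | zero =>
      rw [show 2*(m+1)+0+1 = 2*m+3 from by ring, show m+1+0+2 = m+3 from by ring]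
      have hrec : L (m+1+1) 0 = L (m + 1) 0 + L (m + 1) 1 := by
        rw [L_rec]
        simp [Finset.sum_range_succ]
      have e0 := ihm 0
      rw [show 2*m+0+1 = 2*m+1 from by ring, show m+0+2 = m+2 from by ring] at e0
      have e1 := ihm 1
      rw [show 2*m+1+1 = 2*m+2 from by ring, show m+1+2 = m+3 from by ring] at e1
      have p1 : Nat.choose (2*m+3) (m+1) = Nat.choose (2*m+2) m + Nat.choose (2*m+2) (m+1) :=
        Nat.choose_succ_succ _ _
      have p2 : Nat.choose (2*m+3) (m+3) = Nat.choose (2*m+2) (m+2) + Nat.choose (2*m+2) (m+3) :=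
        Nat.choose_succ_succ _ _
      have p3 : Nat.choose (2*m+2) (m+1) = Nat.choose (2*m+1) m + Nat.choose (2*m+1) (m+1) :=
        Nat.choose_succ_succ _ _
      have p4 : Nat.choose (2*m+2) (m+2) = Nat.choose (2*m+1) (m+1) + Nat.choose (2*m+1) (m+2) :=
        Nat.choose_succ_succ _ _
      rw [hrec]
      omega
    | succ k ihk =>
      rw [show 2*(m+1)+(k+1)+1 = 2*m+k+4 from by ring,
        show m+1+(k+1)+2 = m+k+4 from by ring]
      rw [show 2*(m+1)+k+1 = 2*m+k+3 from by ring,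
        show m+1+k+2 = m+k+3 from by ring] at ihk
      have hrec : L (m+1+1) (k + 1) = L (m+1+1) k + L (m + 1) (k + 2) := by
        rw [L_rec, L_rec, Finset.sum_range_succ]
      have e2 := ihm (k + 2)
      rw [show 2*m+(k+2)+1 = 2*m+k+3 from by ring,
        show m+(k+2)+2 = m+k+4 from by ring] at e2
      have p1 : Nat.choose (2*m+k+4) (m+1) =
          Nat.choose (2*m+k+3) m + Nat.choose (2*m+k+3) (m+1) := Nat.choose_succ_succ _ _
      have p2 : Nat.choose (2*m+k+4) (m+k+4) =
          Nat.choose (2*m+k+3) (m+k+3) + Nat.choose (2*m+k+3) (m+k+4) := Nat.choose_succ_succ _ _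
      rw [hrec]
      omega


theorem partialLuk_lastFlat_count (n k : ℕ) (hn : 2 ≤ n) :
    (n + k) * Nat.card {w : List ℤ // IsPartialLuk w n k ∧ LastStepFlat w} =
      (k + 2) * Nat.choose (2 * n + k - 3) (n - 2) := by
  obtain ⟨m, rfl⟩ : ∃ m, n = m + 2 := ⟨n - 2, by omega⟩
  rw [show 2 * (m + 2) + k - 3 = 2 * m + k + 1 from by omega,
    show m + 2 - 2 = m from by omega]
  have hc : Nat.card {w : List ℤ // IsPartialLuk w (m + 2) k ∧ LastStepFlat w} = L (m + 1) k :=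
    card_flat (m + 1) k
  rw [hc]
  have P := L_closed m k
  have hsym : Nat.choose (2 * m + k + 1) (m + k + 1) = Nat.choose (2 * m + k + 1) m := by
    have := Nat.choose_symm (n := 2 * m + k + 1) (k := m) (by omega)
    rwa [show 2 * m + k + 1 - m = m + k + 1 from by omega] at this
  have C : Nat.choose (2 * m + k + 1) (m + k + 2) * (m + k + 2) =
      Nat.choose (2 * m + k + 1) m * m := by
    have := Nat.choose_succ_right_eq (2 * m + k + 1) (m + k + 1)
    rwa [show 2 * m + k + 1 - (m + k + 1) = m from by omega, hsym] at this
  zify at P C ⊢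
  linear_combination ((m : ℤ) + k + 2) * P - C
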